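/- Let n ≥ 1 and let A = (a_ij) be a positive n×n reciprocal matrix. Then (i) for every positive vector x in ℝⁿ, max_{1≤i,j≤n} a_ij x_j / x_i ≥ 1; and (ii) there exists a positive vector x with max_{1≤i,j≤n} a_ij x_j / x_i = 1 if and only if A is consistent. -/

import Mathlib

/-- For a positive reciprocal matrix `A`: (i) the log-Chebyshev objective
`max_{i,j} a i j * x j / x i` is at least `1` for every positive vector `x`;
(ii) the value `1` is attained by some positive vector iff `A` is consistent. -/
theorem logChebyshev_objective_ge_one_and_eq_one_iff_consistent
    (n : ℕ) (hn : 1 ≤ n) (A : Matrix (Fin n) (Fin n) ℝ)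
    (hpos : ∀ i j, 0 < A i j)
    (hrec : ∀ i j, A i j * A j i = 1) :
    (∀ x : Fin n → ℝ, (∀ j, 0 < x j) → 1 ≤ ⨆ i, ⨆ j, A i j * x j / x i) ∧
      ((∃ x : Fin n → ℝ, (∀ j, 0 < x j) ∧ (⨆ i, ⨆ j, A i j * x j / x i) = 1) ↔
        ∀ i j k, A i j = A i k * A k j) := by
  haveI : Nonempty (Fin n) := ⟨⟨0, hn⟩⟩
  set i0 : Fin n := ⟨0, hn⟩ with hi0
  have hdiag : ∀ i, A i i = 1 := fun i => by nlinarith [hrec i i, hpos i i]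
  constructor
  · intro x hx
    have h1 : A i0 i0 * x i0 / x i0 = 1 := by
      rw [hdiag, one_mul, div_self (ne_of_gt (hx i0))]
    calc (1 : ℝ) = A i0 i0 * x i0 / x i0 := h1.symm
      _ ≤ ⨆ j, A i0 j * x j / x i0 :=
          le_ciSup (f := fun j => A i0 j * x j / x i0)
            (Set.Finite.bddAbove (Set.finite_range _)) i0
      _ ≤ ⨆ i, ⨆ j, A i j * x j / x i :=
          le_ciSup (f := fun i => ⨆ j, A i j * x j / x i)
            (Set.Finite.bddAbove (Set.finite_range _)) i0
  · constructor
    · rintro ⟨x, hx, hsup⟩ i j k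
      have key : ∀ a b, A a b * x b / x a ≤ 1 := by
        intro a b
        rw [← hsup]
        calc A a b * x b / x a ≤ ⨆ j, A a j * x j / x a :=
            le_ciSup (f := fun j => A a j * x j / x a)
              (Set.Finite.bddAbove (Set.finite_range _)) b
          _ ≤ ⨆ i, ⨆ j, A i j * x j / x i :=
            le_ciSup (f := fun i => ⨆ j, A i j * x j / x i)
              (Set.Finite.bddAbove (Set.finite_range _)) a
      have heq : ∀ a b, A a b = x a / x b := by
        intro a b
        have hxa := hx a; have hxb := hx b
        have hab := hpos a b; have hba := hpos b a
        have hr := hrec a b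
        have h1 := (div_le_one hxa).mp (key a b)
        have h2 := (div_le_one hxb).mp (key b a)
        have h3 : x a ≤ A a b * x b := by
          nlinarith [mul_le_mul_of_nonneg_left h2 hab.le]
        have h4 : A a b * x b = x a := le_antisymm h1 h3
        rw [← h4, mul_div_assoc, div_self (ne_of_gt hxb), mul_one]
      rw [heq i j, heq i k, heq k j]
      field_simp
      rw [mul_div_mul_right _ _ (ne_of_gt (hx k))]
    · intro hcons
      refine ⟨fun j => A j i0, fun j => hpos j i0, ?_⟩
      have hone : ∀ i j, A i j * A j i0 / A i i0 = 1 := by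
        intro i j
        rw [← hcons i i0 j]
        exact div_self (ne_of_gt (hpos i i0))
      simp_rw [hone]
      simp [ciSup_const]
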